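/- There exist a compact metric space (X,d), a homeomorphism φ : X → X, and a sequence (Y_m)_{m∈ℕ} of subsets of X such that C(φ, ∪_{m∈ℕ} Y_m) > sup_{m∈ℕ} C(φ, Y_m) and C̲(φ, ∪_{m∈ℕ} Y_m) > sup_{m∈ℕ} C̲(φ, Y_m); consequently, the complexity indices C and C̲ do not enjoy the σ-union property. -/

import Mathlib

open Filter Set Metric
open scoped ENNReal NNReal Topology

/-- The dynamical distance of order `n` associated with the map `φ`:
`d_n^φ(x,y) = max_{0 ≤ k ≤ n-1} d(φ^k x, φ^k y)`. -/
noncomputable def dynDist {X : Type*} [MetricSpace X] (φ : X → X) (n : ℕ) (x y : X) : ℝ :=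
  ⨆ k : Fin n, dist (φ^[(k : ℕ)] x) (φ^[(k : ℕ)] y)

/-- The open `(n,ε)`-ball centered at `x` for the dynamical distance `d_n^φ`. -/
def dynBall {X : Type*} [MetricSpace X] (φ : X → X) (n : ℕ) (x : X) (ε : ℝ) : Set X :=
  {y | dynDist φ n x y < ε}

/-- `G_n(Y,ε)`: the minimal number of `(n,ε)`-balls (centers anywhere in `X`)
needed to cover `Y`. -/
noncomputable def coverNum {X : Type*} [MetricSpace X] (φ : X → X) (n : ℕ) (Y : Set X)
    (ε : ℝ) : ℕ :=
  sInf {m : ℕ | ∃ t : Finset X, t.card = m ∧ Y ⊆ ⋃ x ∈ t, dynBall φ n x ε}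

/-- The (upper) complexity index `C(φ,Y) = sup_{ε>0} limsup_n log G_n(Y,ε) / log n`. -/
noncomputable def upperComplexity {X : Type*} [MetricSpace X] (φ : X → X) (Y : Set X) : ℝ≥0∞ :=
  ⨆ (ε : ℝ) (_ : 0 < ε),
    Filter.limsup
      (fun n : ℕ => ENNReal.ofReal (Real.log (coverNum φ n Y ε) / Real.log n)) Filter.atTop

/-- The lower complexity index `C̲(φ,Y) = sup_{ε>0} liminf_n log G_n(Y,ε) / log n`. -/
noncomputable def lowerComplexity {X : Type*} [MetricSpace X] (φ : X → X) (Y : Set X) : ℝ≥0∞ :=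
  ⨆ (ε : ℝ) (_ : 0 < ε),
    Filter.liminf
      (fun n : ℕ => ENNReal.ofReal (Real.log (coverNum φ n Y ε) / Real.log n)) Filter.atTop

/-- The weight `M(C,s) = Σ_i (1/n_i)^s` of a (countable) family of dynamical balls, the
family being encoded as a set of pairs `(center, order)`. -/
noncomputable def coverWeight {X : Type*} [MetricSpace X] (s : ℝ) (S : Set (X × ℕ)) : ℝ≥0∞ :=
  ∑' p : S, ((p : X × ℕ).2 : ℝ≥0∞)⁻¹ ^ s

/-- A covering of `Y` of order `≥ N` at scale `ε`: a countable family of `(n_i,ε)`-balls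
with all `n_i ≥ N` whose union contains `Y`. -/
def IsDynCover {X : Type*} [MetricSpace X] (φ : X → X) (Y : Set X) (ε : ℝ) (N : ℕ)
    (S : Set (X × ℕ)) : Prop :=
  S.Countable ∧ (∀ p ∈ S, N ≤ p.2) ∧ Y ⊆ ⋃ p ∈ S, dynBall φ p.2 p.1 ε

/-- `δ(Y,ε,s,N)`: the infimum of the weights of coverings of `Y` of order `≥ N`. -/
noncomputable def dynDelta {X : Type*} [MetricSpace X] (φ : X → X) (Y : Set X) (ε s : ℝ)
    (N : ℕ) : ℝ≥0∞ :=
  ⨅ (S : Set (X × ℕ)) (_ : IsDynCover φ Y ε N S), coverWeight s S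

/-- `Δ(Y,ε,s) = sup_{N ≥ 1} δ(Y,ε,s,N)`. -/
noncomputable def dynDeltaSup {X : Type*} [MetricSpace X] (φ : X → X) (Y : Set X)
    (ε s : ℝ) : ℝ≥0∞ :=
  ⨆ (N : ℕ) (_ : 1 ≤ N), dynDelta φ Y ε s N

/-- The critical value `s_c(Y,ε) = inf {s ≥ 0 | Δ(Y,ε,s) = 0}`, as an element of `[0,∞]`
(with `inf ∅ = +∞`). -/
noncomputable def critVal {X : Type*} [MetricSpace X] (φ : X → X) (Y : Set X) (ε : ℝ) : ℝ≥0∞ :=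
  sInf {c : ℝ≥0∞ | ∃ s : ℝ, 0 ≤ s ∧ c = ENNReal.ofReal s ∧ dynDeltaSup φ Y ε s = 0}

/-- The weak complexity index `C*(φ,Y) = sup_{ε>0} s_c(Y,ε)`. -/
noncomputable def weakComplexity {X : Type*} [MetricSpace X] (φ : X → X) (Y : Set X) : ℝ≥0∞ :=
  ⨆ (ε : ℝ) (_ : 0 < ε), critVal φ Y ε

/- ==================== Auxiliary development ==================== -/

namespace NoSigmaUnion

/-- Embedding of `Option ℤ` into `ℝ`: `none ↦ 0`, `some k ↦ ±1/(|k|+1)`-ish. -/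
noncomputable def eMap (a : Option ℤ) : ℝ :=
  a.elim 0 (fun k => if 0 ≤ k then ((k : ℝ) + 1)⁻¹ else -((1 - (k : ℝ))⁻¹))

lemma eMap_none : eMap none = 0 := rfl

lemma eMap_some (k : ℤ) :
    eMap (some k) = if 0 ≤ k then ((k : ℝ) + 1)⁻¹ else -((1 - (k : ℝ))⁻¹) := rfl

/-- Integer "weight". -/
def WZ (k : ℤ) : ℤ := if 0 ≤ k then k + 1 else 1 - k

lemma WZ_pos (k : ℤ) : 1 ≤ WZ k := by unfold WZ; split <;> omega

lemma one_le_W (k : ℤ) : (1 : ℝ) ≤ ((WZ k : ℤ) : ℝ) := by exact_mod_cast WZ_pos k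

lemma W_pos (k : ℤ) : (0 : ℝ) < ((WZ k : ℤ) : ℝ) := lt_of_lt_of_le one_pos (one_le_W k)

lemma eMap_some_eq (k : ℤ) :
    eMap (some k) = (if 0 ≤ k then 1 else -1) * (((WZ k : ℤ) : ℝ))⁻¹ := by
  rw [eMap_some]
  unfold WZ
  by_cases h : 0 ≤ k <;> simp only [if_pos, if_neg, h, ite_true, ite_false] <;>
    push_cast <;> ring

lemma abs_eMap_some (k : ℤ) : |eMap (some k)| = (((WZ k : ℤ) : ℝ))⁻¹ := by
  rw [eMap_some_eq]
  rcases le_or_gt 0 k with h | h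
  · rw [if_pos h, one_mul, abs_of_pos (inv_pos.2 (W_pos k))]
  · rw [if_neg (not_le.2 h), neg_one_mul, abs_neg, abs_of_pos (inv_pos.2 (W_pos k))]

lemma eMap_some_ne_zero (k : ℤ) : eMap (some k) ≠ 0 := by
  intro h
  have h2 := abs_eMap_some k
  rw [h, abs_zero] at h2
  rw [eq_comm, inv_eq_zero] at h2
  have := W_pos k
  linarith

lemma WZ_inj {k k' : ℤ} (hs : (0 ≤ k ↔ 0 ≤ k')) (hw : WZ k = WZ k') : k = k' := by
  unfold WZ at hw
  by_cases h : 0 ≤ k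
  · rw [if_pos h, if_pos (hs.1 h)] at hw; omega
  · rw [if_neg h, if_neg (fun h' => h (hs.2 h'))] at hw; omega

lemma eMap_injective : Function.Injective eMap := by
  intro a b hab
  match a, b with
  | none, none => rfl
  | none, some k => exact absurd hab.symm (eMap_some_ne_zero k)
  | some k, none => exact absurd hab (eMap_some_ne_zero k)
  | some k, some k' =>
    rw [eMap_some_eq, eMap_some_eq] at hab
    have hw := W_pos k
    have hw' := W_pos k'
    have hiv : (0:ℝ) < (((WZ k : ℤ) : ℝ))⁻¹ := by positivity
    have hiv' : (0:ℝ) < (((WZ k' : ℤ) : ℝ))⁻¹ := by positivity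
    have hs : (0 ≤ k ↔ 0 ≤ k') := by
      by_cases h : 0 ≤ k <;> by_cases h' : 0 ≤ k'
      · exact iff_of_true h h'
      · exfalso; rw [if_pos h, if_neg h'] at hab; nlinarith
      · exfalso; rw [if_neg h, if_pos h'] at hab; nlinarith
      · exact iff_of_false h h' 
    have heq : (((WZ k : ℤ) : ℝ))⁻¹ = (((WZ k' : ℤ) : ℝ))⁻¹ := by
      by_cases h : 0 ≤ k
      · rw [if_pos h, if_pos (hs.1 h), one_mul, one_mul] at hab; exact hab
      · rw [if_neg h, if_neg (fun h' => h (hs.2 h')), neg_one_mul, neg_one_mul] at hab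
        exact neg_injective hab
    have : ((WZ k : ℤ) : ℝ) = ((WZ k' : ℤ) : ℝ) := by
      have := inv_injective heq; exact this
    exact congrArg some (WZ_inj hs (by exact_mod_cast this))

noncomputable instance : MetricSpace (Option ℤ) :=
  MetricSpace.induced eMap eMap_injective inferInstance

lemma dist_eq (a b : Option ℤ) : dist a b = |eMap a - eMap b| := Real.dist_eq _ _

lemma isometry_eMap : Isometry eMap := Isometry.of_dist_eq fun _ _ => rfl

/-- `eMap (some ·)` tends to 0 along cofinite. -/
lemma tendsto_eMap : Filter.Tendsto (fun k : ℤ => eMap (some k)) Filter.cofinite (𝓝 0) := by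
  rw [Metric.tendsto_nhds]
  intro ε hε
  rw [Filter.eventually_cofinite]
  have : {k : ℤ | ¬ dist (eMap (some k)) 0 < ε} ⊆ Set.Icc (-⌈ε⁻¹⌉) ⌈ε⁻¹⌉ := by
    intro k hk
    simp only [Set.mem_setOf_eq, not_lt, Real.dist_eq, sub_zero] at hk
    rw [abs_eMap_some] at hk
    have hw := W_pos k
    -- ε ≤ (W k)⁻¹  ⇒  W k ≤ ε⁻¹
    have h1 : (((WZ k : ℤ) : ℝ)) ≤ ε⁻¹ := by
      rw [← inv_inv (((WZ k : ℤ) : ℝ))]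
      exact inv_anti₀ hε hk
    have h2 : ((WZ k : ℤ) : ℝ) ≤ (⌈ε⁻¹⌉ : ℤ) := le_trans h1 (by exact_mod_cast Int.le_ceil ε⁻¹)
    have h3 : WZ k ≤ ⌈ε⁻¹⌉ := by exact_mod_cast h2
    unfold WZ at h3
    constructor
    · by_cases h : 0 ≤ k
      · rw [if_pos h] at h3; omega
      · rw [if_neg h] at h3; omega
    · by_cases h : 0 ≤ k
      · rw [if_pos h] at h3; omega
      · rw [if_neg h] at h3; omega
  exact Set.Finite.subset (Set.finite_Icc _ _) this

instance : CompactSpace (Option ℤ) := by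
  rw [← isCompact_univ_iff]
  rw [isometry_eMap.isEmbedding.isCompact_iff]
  have : eMap '' Set.univ = insert (0:ℝ) (Set.range fun k : ℤ => eMap (some k)) := by
    rw [Set.image_univ]
    ext x
    constructor
    · rintro ⟨(_ | k), rfl⟩
      · exact Set.mem_insert _ _
      · exact Set.mem_insert_of_mem _ ⟨k, rfl⟩
    · rintro (rfl | ⟨k, rfl⟩)
      · exact ⟨none, rfl⟩
      · exact ⟨some k, rfl⟩
  rw [this]
  exact tendsto_eMap.isCompact_insert_range_of_cofinite

/-- The shift map. -/
def phi : Option ℤ → Option ℤ := Option.map (· + 1)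

lemma phi_none : phi none = none := rfl
lemma phi_some (k : ℤ) : phi (some k) = some (k + 1) := rfl

lemma phi_iter_none (t : ℕ) : phi^[t] (none : Option ℤ) = none := by
  induction t with
  | zero => rfl
  | succ t ih => rw [Function.iterate_succ_apply, phi_none, ih]

lemma phi_iter_some (t : ℕ) (m : ℤ) : phi^[t] (some m) = some (m + t) := by
  induction t generalizing m with
  | zero => simp
  | succ t ih =>
    rw [Function.iterate_succ_apply, phi_some, ih]
    congr 1
    push_cast
    ring

/-- Isolation of points `some k`. -/
lemma isolated (k : ℤ) : ∃ δ > 0, ∀ a : Option ℤ, dist a (some k) < δ → a = some k := by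
  set w : ℝ := ((WZ k : ℤ) : ℝ) with hw
  have hw1 : 1 ≤ w := one_le_W k
  have hwpos : 0 < w := W_pos k
  refine ⟨w⁻¹ - (w + 1)⁻¹, by
    have : (w+1)⁻¹ < w⁻¹ := inv_strictAnti₀ hwpos (by linarith)
    linarith, ?_⟩
  intro a ha
  by_contra hne
  rw [dist_eq] at ha
  have key : w⁻¹ - (w+1)⁻¹ ≤ |eMap a - eMap (some k)| := by
    match a with
    | none =>
      rw [eMap_none, zero_sub, abs_neg, abs_eMap_some, ← hw]
      have : (0:ℝ) < (w+1)⁻¹ := by positivity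
      linarith
    | some k' =>
      have hkk' : k' ≠ k := fun h => hne (congrArg some h)
      set w' : ℝ := ((WZ k' : ℤ) : ℝ) with hw'
      have hw'1 : 1 ≤ w' := one_le_W k'
      have hw'pos : 0 < w' := W_pos k'
      rw [eMap_some_eq, eMap_some_eq, ← hw, ← hw']
      by_cases hs : (0 ≤ k' ↔ 0 ≤ k)
      · -- same sign
        have hWne : WZ k' ≠ WZ k := fun h => hkk' (WZ_inj hs h)
        have habs : |(if 0 ≤ k' then (1:ℝ) else -1) * w'⁻¹ -
            (if 0 ≤ k then (1:ℝ) else -1) * w⁻¹| = |w'⁻¹ - w⁻¹| := by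
          by_cases h : 0 ≤ k
          · rw [if_pos (hs.2 h), if_pos h, one_mul, one_mul]
          · rw [if_neg (fun h' => h (hs.1 h')), if_neg h, neg_one_mul, neg_one_mul,
              neg_sub_neg, abs_sub_comm]
        rw [habs]
        rcases lt_or_gt_of_ne hWne with hlt | hgt
        · -- w' < w, so w' ≤ w - 1
          have h1 : w' ≤ w - 1 := by
            have hzz : ((WZ k' : ℤ) : ℝ) ≤ ((WZ k : ℤ) : ℝ) - 1 := by
              have : WZ k' ≤ WZ k - 1 := by omega
              exact_mod_cast this
            rw [← hw, ← hw'] at hzz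
            linarith
          have hw2 : 2 ≤ w := by linarith
          have h2 : (w-1)⁻¹ ≤ w'⁻¹ := inv_anti₀ (by linarith) h1
          have h3 : w⁻¹ - (w+1)⁻¹ ≤ (w-1)⁻¹ - w⁻¹ := by
            have hne1 : w - 1 ≠ 0 := by linarith
            have hne2 : w ≠ 0 := by linarith
            have hne3 : w + 1 ≠ 0 := by linarith
            have e1 : (w-1)⁻¹ - w⁻¹ = ((w-1)*w)⁻¹ := by
              field_simp
              ring
            have e2 : w⁻¹ - (w+1)⁻¹ = (w*(w+1))⁻¹ := by
              field_simp
              ring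
            rw [e1, e2]
            exact inv_anti₀ (by nlinarith) (by nlinarith)
          have habs2 : w'⁻¹ - w⁻¹ ≤ |w'⁻¹ - w⁻¹| := le_abs_self _
          linarith
        · -- w < w', so w + 1 ≤ w'
          have h1 : w + 1 ≤ w' := by
            have hzz : ((WZ k : ℤ) : ℝ) + 1 ≤ ((WZ k' : ℤ) : ℝ) := by
              have : WZ k + 1 ≤ WZ k' := by omega
              exact_mod_cast this
            rw [← hw, ← hw'] at hzz
            linarith
          have h2 : w'⁻¹ ≤ (w+1)⁻¹ := inv_anti₀ (by linarith) h1
          have habs2 : -(w'⁻¹ - w⁻¹) ≤ |w'⁻¹ - w⁻¹| := neg_le_abs _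
          linarith
      · -- opposite signs
        have hiv : (0:ℝ) < w⁻¹ := by positivity
        have hiv' : (0:ℝ) < w'⁻¹ := by positivity
        have hd : (w+1)⁻¹ > 0 := by positivity
        by_cases h : 0 ≤ k
        · have h' : ¬ 0 ≤ k' := fun hh => hs ⟨fun _ => h, fun _ => hh⟩
          rw [if_neg h', if_pos h, neg_one_mul, one_mul]
          have : |-w'⁻¹ - w⁻¹| = w'⁻¹ + w⁻¹ := by
            rw [abs_of_nonpos (by linarith)]; ring
          rw [this]; linarith
        · have h' : 0 ≤ k' := by
            by_contra h''
            exact hs ⟨fun hh => absurd hh h'', fun hh => absurd hh h⟩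
          rw [if_pos h', if_neg h, neg_one_mul, one_mul]
          have : |w'⁻¹ - -w⁻¹| = w'⁻¹ + w⁻¹ := by
            rw [abs_of_nonneg (by linarith)]; ring
          rw [this]; linarith
  linarith

/-- Growth bound used for continuity at `none`. -/
lemma abs_eMap_phi_le (a : Option ℤ) : |eMap (phi a)| ≤ 2 * |eMap a| := by
  match a with
  | none => simp [phi_none, eMap_none]
  | some j =>
    rw [phi_some, abs_eMap_some, abs_eMap_some]
    unfold WZ
    rcases le_or_gt 0 j with h | h
    · rw [if_pos (by omega : (0:ℤ) ≤ j + 1), if_pos h]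
      have h1 : (0:ℝ) < (j:ℝ) + 1 := by
        have : (0:ℝ) ≤ (j:ℝ) := by exact_mod_cast h
        linarith
      have : ((j + 1 + 1 : ℤ) : ℝ)⁻¹ ≤ ((j + 1 : ℤ) : ℝ)⁻¹ := by
        apply inv_anti₀
        · push_cast; linarith
        · push_cast; linarith
      have h2 : (0:ℝ) < ((j+1:ℤ):ℝ)⁻¹ := by
        have : (0:ℝ) < ((j+1:ℤ):ℝ) := by push_cast; linarith
        positivity
      linarith
    · rcases eq_or_lt_of_le (by omega : j ≤ -1) with rfl | hj
      · norm_num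
      · have hj2 : j + 1 < 0 := by omega
        rw [if_neg (by omega), if_neg (by omega)]
        have hc1 : (0:ℝ) < ((1 - (j+1) : ℤ) : ℝ) := by
          push_cast
          have : ((j:ℝ)) ≤ -2 := by exact_mod_cast (by omega : j ≤ -2)
          linarith
        have hc2 : (0:ℝ) < ((1 - j : ℤ) : ℝ) := by
          push_cast
          have : ((j:ℝ)) ≤ -2 := by exact_mod_cast (by omega : j ≤ -2)
          linarith
        have hkey : ((1 - j : ℤ) : ℝ) ≤ 2 * ((1 - (j+1) : ℤ) : ℝ) := by
          push_cast
          have : ((j:ℝ)) ≤ -2 := by exact_mod_cast (by omega : j ≤ -2)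
          linarith
        -- (1-(j+1))⁻¹ ≤ 2 * (1-j)⁻¹
        rw [show (2:ℝ) * ((1 - j : ℤ) : ℝ)⁻¹ = (((1 - j : ℤ) : ℝ) / 2)⁻¹ by
          rw [inv_div]; ring]
        exact inv_anti₀ (by linarith) (by linarith)

lemma phi_continuous : Continuous phi := by
  rw [Metric.continuous_iff]
  intro b ε hε
  match b with
  | none =>
    refine ⟨ε / 2, by linarith, fun a ha => ?_⟩
    rw [phi_none, dist_eq, eMap_none, sub_zero]
    calc |eMap (phi a)| ≤ 2 * |eMap a| := abs_eMap_phi_le a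
      _ < 2 * (ε / 2) := by
          have := abs_eMap_phi_le a
          rw [dist_eq, show eMap none = 0 from rfl, sub_zero] at ha
          linarith
      _ = ε := by ring
  | some k =>
    obtain ⟨δ, hδ, hiso⟩ := isolated k
    exact ⟨δ, hδ, fun a ha => by rw [hiso a ha, dist_self]; exact hε⟩

/-- The shift as an equiv. -/
def phiEquiv : Option ℤ ≃ Option ℤ := Equiv.optionCongr (Equiv.addRight (1:ℤ))

lemma phiEquiv_coe : ⇑phiEquiv = phi := rfl

lemma isHomeomorph_phi : IsHomeomorph phi := by
  have hc : Continuous (⇑phiEquiv) := by rw [phiEquiv_coe]; exact phi_continuous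
  have h := (hc.homeoOfEquivCompactToT2 (f := phiEquiv)).isHomeomorph
  exact h

/- ============ dynDist generalities ============ -/

lemma dynDist_self {X : Type*} [MetricSpace X] (φ : X → X) (n : ℕ) (x : X) :
    dynDist φ n x x = 0 := by
  unfold dynDist
  simp

lemma dist_le_dynDist {X : Type*} [MetricSpace X] (φ : X → X) {n : ℕ} (x y : X) (k : Fin n) :
    dist (φ^[(k : ℕ)] x) (φ^[(k : ℕ)] y) ≤ dynDist φ n x y := by
  unfold dynDist
  exact le_ciSup (f := fun k : Fin n => dist (φ^[(k : ℕ)] x) (φ^[(k : ℕ)] y))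
    (Set.Finite.bddAbove (Set.finite_range _)) k

lemma dynDist_le {X : Type*} [MetricSpace X] {φ : X → X} {n : ℕ} {x y : X} {c : ℝ}
    (hc : 0 ≤ c) (h : ∀ k : Fin n, dist (φ^[(k : ℕ)] x) (φ^[(k : ℕ)] y) ≤ c) :
    dynDist φ n x y ≤ c :=
  Real.iSup_le h hc

lemma mem_dynBall_self {X : Type*} [MetricSpace X] (φ : X → X) (n : ℕ) (x : X) {ε : ℝ}
    (hε : 0 < ε) : x ∈ dynBall φ n x ε := by
  show dynDist φ n x x < ε
  rw [dynDist_self]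
  exact hε

/- ============ singleton complexity ============ -/

lemma coverNum_singleton_le {X : Type*} [MetricSpace X] (φ : X → X) (n : ℕ) (p : X) {ε : ℝ}
    (hε : 0 < ε) : coverNum φ n {p} ε ≤ 1 := by
  apply Nat.sInf_le
  refine ⟨{p}, Finset.card_singleton p, ?_⟩
  intro y hy
  rw [Set.mem_singleton_iff] at hy
  rw [hy]
  exact Set.mem_biUnion (Finset.mem_singleton_self p) (mem_dynBall_self φ n p hε)

lemma log_coverNum_singleton {X : Type*} [MetricSpace X] (φ : X → X) (n : ℕ) (p : X) {ε : ℝ}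
    (hε : 0 < ε) : Real.log (coverNum φ n {p} ε) = 0 := by
  have h := coverNum_singleton_le φ n p hε
  rcases Nat.le_one_iff_eq_zero_or_eq_one.mp h with h | h <;> rw [h] <;> simp

lemma upperComplexity_singleton {X : Type*} [MetricSpace X] (φ : X → X) (p : X) :
    upperComplexity φ {p} = 0 := by
  unfold upperComplexity
  refine le_antisymm ?_ zero_le
  refine iSup₂_le fun ε hε => ?_
  have : (fun n : ℕ => ENNReal.ofReal (Real.log (coverNum φ n {p} ε) / Real.log n)) =
      fun _ => (0 : ℝ≥0∞) := by
    funext n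
    rw [log_coverNum_singleton φ n p hε, zero_div, ENNReal.ofReal_zero]
  rw [this, Filter.limsup_const]

lemma lowerComplexity_singleton {X : Type*} [MetricSpace X] (φ : X → X) (p : X) :
    lowerComplexity φ {p} = 0 := by
  unfold lowerComplexity
  refine le_antisymm ?_ zero_le
  refine iSup₂_le fun ε hε => ?_
  have : (fun n : ℕ => ENNReal.ofReal (Real.log (coverNum φ n {p} ε) / Real.log n)) =
      fun _ => (0 : ℝ≥0∞) := by
    funext n
    rw [log_coverNum_singleton φ n p hε, zero_div, ENNReal.ofReal_zero]
  rw [this, Filter.liminf_const]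

/- ============ the union and its covering numbers ============ -/

/-- The sets `Y m`. -/
def Ym (m : ℕ) : Set (Option ℤ) := {some (-(m : ℤ))}

lemma mem_U (m : ℕ) : (some (-(m : ℤ)) : Option ℤ) ∈ ⋃ m, Ym m :=
  Set.mem_iUnion.2 ⟨m, rfl⟩

lemma U_sub {y : Option ℤ} (hy : y ∈ ⋃ m, Ym m) : ∃ m : ℕ, y = some (-(m : ℤ)) := by
  obtain ⟨m, hm⟩ := Set.mem_iUnion.1 hy
  exact ⟨m, hm⟩

lemma dist_none_some {j : ℤ} (hj : j < 0) :
    dist (none : Option ℤ) (some j) = (1 - (j : ℝ))⁻¹ := by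
  rw [dist_eq, eMap_none, eMap_some, if_neg (not_le.2 hj)]
  have : (0:ℝ) < 1 - (j:ℝ) := by
    have : (j:ℝ) < 0 := by exact_mod_cast hj
    linarith
  rw [zero_sub, neg_neg, abs_of_pos (by positivity)]

lemma one_le_dist_zero_neg {b : ℤ} (hb : b < 0) :
    (1 : ℝ) ≤ dist (some (0:ℤ) : Option ℤ) (some b) := by
  rw [dist_eq, eMap_some, eMap_some, if_pos le_rfl, if_neg (not_le.2 hb)]
  have h1 : (0:ℝ) < 1 - (b:ℝ) := by
    have : (b:ℝ) < 0 := by exact_mod_cast hb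
    linarith
  have h2 : (0:ℝ) < (1 - (b:ℝ))⁻¹ := by positivity
  rw [show ((0:ℤ):ℝ) + 1 = 1 by norm_num, inv_one]
  rw [abs_of_pos (by linarith : (0:ℝ) < 1 - -((1 - (b:ℝ))⁻¹))]
  linarith

/-- Existence of a finite cover of the union at scale 1/2. -/
lemma cover_exists (n : ℕ) :
    {m : ℕ | ∃ t : Finset (Option ℤ), t.card = m ∧
      (⋃ m, Ym m) ⊆ ⋃ x ∈ t, dynBall phi n x (1/2)}.Nonempty := by
  classical
  set t : Finset (Option ℤ) :=
    insert none ((Finset.range (n + 2)).image fun m : ℕ => (some (-(m : ℤ)) : Option ℤ)) with ht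
  refine ⟨t.card, t, rfl, ?_⟩
  intro y hy
  obtain ⟨m, rfl⟩ := U_sub hy
  by_cases hm : m < n + 2
  · refine Set.mem_biUnion ?_ (mem_dynBall_self phi n _ (by norm_num))
    rw [ht]
    exact Finset.mem_insert_of_mem (Finset.mem_image.2 ⟨m, Finset.mem_range.2 hm, rfl⟩)
  · push_neg at hm
    refine Set.mem_biUnion (by rw [ht]; exact Finset.mem_insert_self _ _) ?_
    show dynDist phi n none (some (-(m:ℤ))) < 1/2
    refine lt_of_le_of_lt (dynDist_le (by norm_num : (0:ℝ) ≤ 1/4) fun k => ?_)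
      (by norm_num : (1:ℝ)/4 < 1/2)
    rw [phi_iter_none, phi_iter_some]
    have hk : (k : ℕ) < n := k.2
    have hneg : -(m:ℤ) + (k:ℕ) < 0 := by omega
    rw [dist_none_some hneg]
    have h4 : (4:ℝ) ≤ 1 - ((-(m:ℤ) + ((k:ℕ):ℤ) : ℤ) : ℝ) := by
      push_cast
      have h1 : ((k:ℕ):ℝ) ≤ (n:ℝ) - 1 := by
        have : ((k:ℕ):ℝ) + 1 ≤ (n:ℝ) := by exact_mod_cast hk
        linarith
      have h2 : (n:ℝ) + 2 ≤ (m:ℝ) := by exact_mod_cast hm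
      linarith
    calc (1 - ((-(m:ℤ) + ((k:ℕ):ℤ) : ℤ) : ℝ))⁻¹ ≤ (4:ℝ)⁻¹ := by
          apply inv_anti₀ (by norm_num)
          push_cast at h4 ⊢
          linarith
      _ = 1/4 := by norm_num

/-- Any cover of the union at scale 1/2 has at least `n` balls. -/
lemma cover_card_ge (n : ℕ) (t : Finset (Option ℤ))
    (ht : (⋃ m, Ym m) ⊆ ⋃ x ∈ t, dynBall phi n x (1/2)) : n ≤ t.card := by
  classical
  have hP : ∀ i : Fin n, (some (-(i : ℤ)) : Option ℤ) ∈ ⋃ m, Ym m := fun i => mem_U i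
  have hmem : ∀ i : Fin n, ∃ x ∈ t, (some (-(i:ℤ)) : Option ℤ) ∈ dynBall phi n x (1/2) := by
    intro i
    have := ht (hP i)
    simpa using this
  choose c hc1 hc2 using hmem
  have key : ∀ i j : Fin n, (i : ℕ) < (j : ℕ) → c i ≠ c j := by
    intro i j hij heq
    have h1 : dynDist phi n (c i) (some (-(i:ℤ))) < 1/2 := hc2 i
    have h2 : dynDist phi n (c j) (some (-(j:ℤ))) < 1/2 := hc2 j
    rw [← heq] at h2
    have d1 : dist (phi^[(i:ℕ)] (c i)) (phi^[(i:ℕ)] (some (-(i:ℤ)))) ≤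
        dynDist phi n (c i) (some (-(i:ℤ))) := dist_le_dynDist phi _ _ i
    have d2 : dist (phi^[(i:ℕ)] (c i)) (phi^[(i:ℕ)] (some (-(j:ℤ)))) ≤
        dynDist phi n (c i) (some (-(j:ℤ))) := dist_le_dynDist phi _ _ i
    rw [phi_iter_some] at d1 d2
    have e1 : (-(i:ℤ) + ((i:ℕ):ℤ)) = 0 := by omega
    rw [e1] at d1
    have hneg : -(j:ℤ) + ((i:ℕ):ℤ) < 0 := by omega
    have tri : (1:ℝ) ≤ dist (some (0:ℤ) : Option ℤ) (some (-(j:ℤ) + ((i:ℕ):ℤ))) :=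
      one_le_dist_zero_neg hneg
    have tri2 : dist (some (0:ℤ) : Option ℤ) (some (-(j:ℤ) + ((i:ℕ):ℤ))) ≤
        dist (phi^[(i:ℕ)] (c i)) (some (0:ℤ)) +
        dist (phi^[(i:ℕ)] (c i)) (some (-(j:ℤ) + ((i:ℕ):ℤ))) := dist_triangle_left _ _ _
    linarith
  have hinj : Function.Injective c := by
    intro i j hij
    by_contra hne
    rcases lt_or_gt_of_ne (fun h : (i:ℕ) = (j:ℕ) => hne (Fin.ext h)) with h | h
    · exact key i j h hij
    · exact key j i h hij.symm
  calc n = (Finset.univ : Finset (Fin n)).card := by simp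
    _ ≤ t.card := Finset.card_le_card_of_injOn c (fun i _ => hc1 i) hinj.injOn

lemma coverNum_U_ge (n : ℕ) : n ≤ coverNum phi n (⋃ m, Ym m) (1/2) := by
  have hne := cover_exists n
  have hmem := Nat.sInf_mem hne
  obtain ⟨t, htc, hts⟩ := hmem
  have := cover_card_ge n t hts
  unfold coverNum
  omega

lemma one_le_liminf_U :
    (1 : ℝ≥0∞) ≤ Filter.liminf
      (fun n : ℕ => ENNReal.ofReal
        (Real.log (coverNum phi n (⋃ m, Ym m) (1/2)) / Real.log n)) Filter.atTop := by
  refine Filter.le_liminf_of_le (by isBoundedDefault) ?_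
  filter_upwards [Filter.eventually_ge_atTop 2] with n hn
  have h1 : n ≤ coverNum phi n (⋃ m, Ym m) (1/2) := coverNum_U_ge n
  have h2 : (1:ℝ) < (n:ℝ) := by exact_mod_cast (by omega : 1 < n)
  have hlog : 0 < Real.log n := Real.log_pos h2
  have hmono : Real.log n ≤ Real.log (coverNum phi n (⋃ m, Ym m) (1/2)) := by
    apply Real.log_le_log (by linarith)
    exact_mod_cast h1
  have hdiv : (1:ℝ) ≤ Real.log (coverNum phi n (⋃ m, Ym m) (1/2)) / Real.log n := by
    rw [le_div_iff₀ hlog]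
    linarith
  calc (1:ℝ≥0∞) = ENNReal.ofReal 1 := ENNReal.ofReal_one.symm
    _ ≤ _ := ENNReal.ofReal_le_ofReal hdiv

end NoSigmaUnion


/-- the complexity indices `C` and `C̲` do not enjoy the σ-union property:
there are a compact metric space `X`, a homeomorphism `φ : X → X` and a sequence of
subsets `(Y_m)` with `C(φ, ∪_m Y_m) > sup_m C(φ, Y_m)` and
`C̲(φ, ∪_m Y_m) > sup_m C̲(φ, Y_m)`. -/
theorem complexity_no_sigma_union :
    ∃ (X : Type) (_ : MetricSpace X) (_ : CompactSpace X) (φ : X → X),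
      IsHomeomorph φ ∧
      ∃ Y : ℕ → Set X,
        (⨆ m, upperComplexity φ (Y m)) < upperComplexity φ (⋃ m, Y m) ∧
        (⨆ m, lowerComplexity φ (Y m)) < lowerComplexity φ (⋃ m, Y m) := by
  classical
  refine ⟨Option ℤ, inferInstance, inferInstance, NoSigmaUnion.phi,
    NoSigmaUnion.isHomeomorph_phi, NoSigmaUnion.Ym, ?_, ?_⟩
  · have hL : (⨆ m, upperComplexity NoSigmaUnion.phi (NoSigmaUnion.Ym m)) = 0 := by
      have : ∀ m : ℕ, upperComplexity NoSigmaUnion.phi (NoSigmaUnion.Ym m) = 0 := fun m =>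
        NoSigmaUnion.upperComplexity_singleton NoSigmaUnion.phi _
      simp [this]
    rw [hL]
    have hle : (1:ℝ≥0∞) ≤ Filter.limsup
        (fun n : ℕ => ENNReal.ofReal
          (Real.log (coverNum NoSigmaUnion.phi n (⋃ m, NoSigmaUnion.Ym m) (1/2)) /
            Real.log n)) Filter.atTop :=
      le_trans NoSigmaUnion.one_le_liminf_U Filter.liminf_le_limsup
    have h1 : (1:ℝ≥0∞) ≤ upperComplexity NoSigmaUnion.phi (⋃ m, NoSigmaUnion.Ym m) := by
      refine le_trans hle ?_
      exact le_iSup₂ (f := fun (ε : ℝ) (_ : 0 < ε) => Filter.limsup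
        (fun n : ℕ => ENNReal.ofReal
          (Real.log (coverNum NoSigmaUnion.phi n (⋃ m, NoSigmaUnion.Ym m) ε) / Real.log n))
        Filter.atTop) (1/2 : ℝ) (by norm_num)
    exact lt_of_lt_of_le (by norm_num) h1
  · have hL : (⨆ m, lowerComplexity NoSigmaUnion.phi (NoSigmaUnion.Ym m)) = 0 := by
      have : ∀ m : ℕ, lowerComplexity NoSigmaUnion.phi (NoSigmaUnion.Ym m) = 0 := fun m =>
        NoSigmaUnion.lowerComplexity_singleton NoSigmaUnion.phi _
      simp [this]
    rw [hL]
    have h1 : (1:ℝ≥0∞) ≤ lowerComplexity NoSigmaUnion.phi (⋃ m, NoSigmaUnion.Ym m) := by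
      refine le_trans NoSigmaUnion.one_le_liminf_U ?_
      exact le_iSup₂ (f := fun (ε : ℝ) (_ : 0 < ε) => Filter.liminf
        (fun n : ℕ => ENNReal.ofReal
          (Real.log (coverNum NoSigmaUnion.phi n (⋃ m, NoSigmaUnion.Ym m) ε) / Real.log n))
        Filter.atTop) (1/2 : ℝ) (by norm_num)
    exact lt_of_lt_of_le (by norm_num) h1
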